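/- For every integer n ≥ 3, the spectral radius of the matrix M_n equals the spectral radius of the compacted matrix C_n of rank n. -/

import Mathlib

/-- The spectral radius of a square real matrix: the maximum (supremum) of the
moduli of its complex eigenvalues. -/
noncomputable def specRad {m : Type*} [Fintype m] [DecidableEq m]
    (M : Matrix m m ℝ) : ℝ :=
  sSup {x : ℝ | ∃ z ∈ spectrum ℂ (M.map (algebraMap ℝ ℂ)), ‖z‖ = x}

/-- `t` lies in the cyclic interval from `a` to `b` in `ℤ/m` (indices reduced mod `m`). -/
def inCyc (m t a b : ℕ) : Prop :=
  (t + m - a % m) % m ≤ (b % m + m - a % m) % m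

instance (m t a b : ℕ) : Decidable (inCyc m t a b) := by
  unfold inCyc; infer_instance

/-- The defining condition for the entries of the Markov matrix `M_n`:
`Mcond n l t i j` holds iff `m^{(l+1)(t+1)}_{(i+1)(j+1)} = 1`, where `l, t` range
over `{0, …, 2n-1}` and `i, j` over `{0, …, 2n-2}` (zero-indexed versions of the
one-indexed block indices `{1, …, 2n}` and entry indices `{1, …, 2n-1}`). -/
def Mcond (n l t i j : ℕ) : Prop :=
  (i + 1 ≤ n - 3 ∧ j = i + 1 ∧ t = (l + n + 1) % (2 * n)) ∨
  (i = n - 3 ∧ (j = n - 2 ∨ j = n - 1) ∧ t = (l + n + 1) % (2 * n)) ∨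
  (i = n - 2 ∧ ((n ≤ j ∧ t = (l + n + 1) % (2 * n)) ∨
      inCyc (2 * n) t (l + n + 2) (l + 2 * n - 1))) ∨
  (i = n - 1 ∧ t = l) ∨
  (i = n ∧ ((j + 2 ≤ n ∧ t = (l + n - 1) % (2 * n)) ∨
      inCyc (2 * n) t (l + 1) (l + n - 2))) ∨
  (i = n + 1 ∧ (j = n - 1 ∨ j = n) ∧ t = (l + n - 1) % (2 * n)) ∨
  (n + 2 ≤ i ∧ j + 1 = i ∧ t = (l + n - 1) % (2 * n))

instance (n l t i j : ℕ) : Decidable (Mcond n l t i j) := by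
  unfold Mcond; infer_instance

/-- The Markov matrix `M_n`, a `2n(2n-1) × 2n(2n-1)` `(0,1)`-matrix written as a
`2n × 2n` array of `(2n-1) × (2n-1)` blocks. -/
def Mmat (n : ℕ) :
    Matrix (Fin (2 * n) × Fin (2 * n - 1)) (Fin (2 * n) × Fin (2 * n - 1)) ℝ :=
  Matrix.of fun p q => if Mcond n p.1.val q.1.val p.2.val q.2.val then 1 else 0

/-- Entry `(i+1, j+1)` of the compacted matrix `C_n` of rank `n` (zero-indexed
`i, j ∈ {0, …, 2n-2}` corresponding to one-indexed indices in `{1, …, 2n-1}`). -/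
def Cfun (n i j : ℕ) : ℝ :=
  if i + 1 ≤ n - 3 ∧ j = i + 1 then 1
  else if i = n - 3 ∧ (j = n - 2 ∨ j = n - 1) then 1
  else if i = n - 2 ∧ j + 1 ≤ n then (n : ℝ) - 2
  else if i = n - 2 ∧ n ≤ j then (n : ℝ) - 1
  else if i = n - 1 then 1
  else if i = n ∧ j + 2 ≤ n then (n : ℝ) - 1
  else if i = n ∧ n - 1 ≤ j then (n : ℝ) - 2
  else if i = n + 1 ∧ (j = n - 1 ∨ j = n) then 1
  else if n + 2 ≤ i ∧ j + 1 = i then 1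
  else 0

/-- The compacted matrix `C_n` of rank `n`, of size `(2n-1) × (2n-1)`. -/
def Cmat (n : ℕ) : Matrix (Fin (2 * n - 1)) (Fin (2 * n - 1)) ℝ :=
  Matrix.of fun i j => Cfun n i.val j.val


lemma modR1 {m a b : ℕ} (hm : 0 < m) (hab : a ≤ b) (hba : b - a < m) :
    (b % m + m - a % m) % m = b - a := by
  have h1 : a % m < m := Nat.mod_lt _ hm
  have c1 : (b % m + m - a % m) + a % m ≡ (b - a) + a % m [MOD m] := by
    have e1 : (b % m + m - a % m) + a % m = b % m + m := by omega
    rw [e1]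
    calc b % m + m ≡ b % m [MOD m] := by
          unfold Nat.ModEq; rw [Nat.add_mod_right]
      _ ≡ b [MOD m] := (Nat.mod_modEq b m)
      _ = (b - a) + a := by omega
      _ ≡ (b - a) + a % m [MOD m] := ((Nat.mod_modEq a m).symm).add_left _
  have c2 := Nat.ModEq.add_right_cancel' (a % m) c1
  calc (b % m + m - a % m) % m = (b - a) % m := c2
    _ = b - a := Nat.mod_eq_of_lt hba

lemma modH1 {m a t : ℕ} (hm : 0 < m) (ht : t < m) :
    ((t + m - a % m) % m + a) % m = t := by
  have h1 : a % m < m := Nat.mod_lt _ hm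
  have h2 : a % m ≤ a := Nat.mod_le _ _
  have c0 : (t + m - a % m) % m + a ≡ (t + m - a % m) + a [MOD m] :=
    (Nat.mod_modEq _ m).add_right a
  have c1 : ((t + m - a % m) + a) + a % m ≡ t + a % m [MOD m] := by
    have e1 : ((t + m - a % m) + a) + a % m = (t + a) + m := by omega
    rw [e1]
    calc (t + a) + m ≡ t + a [MOD m] := by unfold Nat.ModEq; rw [Nat.add_mod_right]
      _ ≡ t + a % m [MOD m] := ((Nat.mod_modEq a m).symm).add_left _
  have c2 : (t + m - a % m) + a ≡ t [MOD m] := Nat.ModEq.add_right_cancel' (a % m) c1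
  calc ((t + m - a % m) % m + a) % m = ((t + m - a % m) + a) % m := c0
    _ = t % m := c2
    _ = t := Nat.mod_eq_of_lt ht

lemma modH2 {m a s : ℕ} (hm : 0 < m) (hs : s < m) :
    ((s + a) % m + m - a % m) % m = s := by
  have h1 : a % m < m := Nat.mod_lt _ hm
  have c1 : ((s + a) % m + m - a % m) + a % m ≡ s + a % m [MOD m] := by
    have e1 : ((s + a) % m + m - a % m) + a % m = (s + a) % m + m := by omega
    rw [e1]
    calc (s + a) % m + m ≡ (s + a) % m [MOD m] := by
          unfold Nat.ModEq; rw [Nat.add_mod_right]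
      _ ≡ s + a [MOD m] := Nat.mod_modEq _ m
      _ ≡ s + a % m [MOD m] := ((Nat.mod_modEq a m).symm).add_left _
  have c2 : (s + a) % m + m - a % m ≡ s [MOD m] := Nat.ModEq.add_right_cancel' (a % m) c1
  calc ((s + a) % m + m - a % m) % m = s % m := c2
    _ = s := Nat.mod_eq_of_lt hs

lemma modPred {m x : ℕ} (hm : 2 ≤ m) : (x % m + m - (x + 1) % m) % m = m - 1 := by
  have := modR1 (m := m) (a := x + 1) (b := x + m) (by omega) (by omega) (by omega)
  rw [Nat.add_mod_right] at this
  omega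

lemma cardCount (m a r : ℕ) (hm : 0 < m) (hr : r < m) :
    ((Finset.range m).filter (fun t => (t + m - a % m) % m ≤ r)).card = r + 1 := by
  rw [show r + 1 = (Finset.range (r + 1)).card from (Finset.card_range _).symm]
  apply Finset.card_bij' (fun t _ => (t + m - a % m) % m) (fun s _ => (s + a) % m)
  · intro t ht
    rw [Finset.mem_filter] at ht
    rw [Finset.mem_range]
    omega
  · intro s hs
    rw [Finset.mem_range] at hs
    rw [Finset.mem_filter, Finset.mem_range]
    have hsm : s < m := by omega
    constructor
    · exact Nat.mod_lt _ hm
    · rw [modH2 hm hsm]; omega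
  · intro t ht
    rw [Finset.mem_filter, Finset.mem_range] at ht
    exact modH1 hm ht.1
  · intro s hs
    rw [Finset.mem_range] at hs
    exact modH2 hm (by omega)
lemma cardSingle {m c : ℕ} (P : Prop) [Decidable P] (hc : c < m) :
    (((Finset.range m).filter (fun t => P ∧ t = c)).card : ℝ) = if P then 1 else 0 := by
  by_cases hP : P
  · rw [if_pos hP]
    have h : (Finset.range m).filter (fun t => P ∧ t = c) = {c} := by
      ext t
      simp only [Finset.mem_filter, Finset.mem_range, Finset.mem_singleton, hP, true_and]
      constructor
      · exact fun h => h.2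
      · rintro rfl; exact ⟨hc, rfl⟩
    rw [h]; simp
  · rw [if_neg hP, Finset.filter_false_of_mem (fun t _ => by simp [hP])]
    simp

lemma rowSumCard (n l i j : ℕ) (hn : 3 ≤ n) (hl : l < 2 * n) :
    (((Finset.range (2 * n)).filter (fun t => Mcond n l t i j)).card : ℝ) = Cfun n i j := by
  have hm : 0 < 2 * n := by omega
  have hT1 : (l + n + 1) % (2 * n) < 2 * n := Nat.mod_lt _ hm
  have hT2 : (l + n - 1) % (2 * n) < 2 * n := Nat.mod_lt _ hm
  by_cases c1 : i + 1 ≤ n - 3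
  · -- branch 1
    have hiff : ∀ t, Mcond n l t i j ↔ (j = i + 1 ∧ t = (l + n + 1) % (2 * n)) := by
      intro t
      unfold Mcond
      constructor
      · rintro (⟨h1, h2, h3⟩ | ⟨h1, h2, h3⟩ | ⟨h1, h2⟩ | ⟨h1, h2⟩ | ⟨h1, h2⟩ |
          ⟨h1, h2, h3⟩ | ⟨h1, h2, h3⟩) <;> first | exact ⟨h2, h3⟩ | omega
      · intro h; exact Or.inl ⟨c1, h.1, h.2⟩
    rw [Finset.filter_congr (fun t _ => hiff t), cardSingle _ hT1]
    unfold Cfun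
    by_cases hj : j = i + 1
    · rw [if_pos hj, if_pos ⟨c1, hj⟩]
    · rw [if_neg hj, if_neg (by tauto), if_neg (by omega), if_neg (by omega),
        if_neg (by omega), if_neg (by omega), if_neg (by omega), if_neg (by omega),
        if_neg (by omega), if_neg (by omega)]
  by_cases c2 : i = n - 3
  · have hiff : ∀ t, Mcond n l t i j ↔ ((j = n - 2 ∨ j = n - 1) ∧ t = (l + n + 1) % (2 * n)) := by
      intro t
      unfold Mcond
      constructor
      · rintro (⟨h1, h2, h3⟩ | ⟨h1, h2, h3⟩ | ⟨h1, h2⟩ | ⟨h1, h2⟩ | ⟨h1, h2⟩ |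
          ⟨h1, h2, h3⟩ | ⟨h1, h2, h3⟩) <;> first | exact ⟨h2, h3⟩ | omega
      · intro h; exact Or.inr (Or.inl ⟨c2, h.1, h.2⟩)
    rw [Finset.filter_congr (fun t _ => hiff t), cardSingle _ hT1]
    unfold Cfun
    by_cases hj : j = n - 2 ∨ j = n - 1
    · rw [if_pos hj, if_neg (by omega), if_pos ⟨c2, hj⟩]
    · rw [if_neg hj, if_neg (by omega), if_neg (by tauto), if_neg (by omega),
        if_neg (by omega), if_neg (by omega), if_neg (by omega), if_neg (by omega),
        if_neg (by omega), if_neg (by omega)]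
  by_cases c3 : i = n - 2
  · have e3 : ((l + 2 * n - 1) % (2 * n) + 2 * n - (l + n + 2) % (2 * n)) % (2 * n)
        = l + 2 * n - 1 - (l + n + 2) := modR1 hm (by omega) (by omega)
    have hiff : ∀ t, Mcond n l t i j ↔ ((n ≤ j ∧ t = (l + n + 1) % (2 * n)) ∨
        (t + 2 * n - (l + n + 2) % (2 * n)) % (2 * n) ≤ n - 3) := by
      intro t
      unfold Mcond inCyc
      constructor
      · rintro (⟨h1, h2, h3⟩ | ⟨h1, h2, h3⟩ | ⟨h1, h2 | h2⟩ | ⟨h1, h2⟩ | ⟨h1, h2⟩ |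
          ⟨h1, h2, h3⟩ | ⟨h1, h2, h3⟩) <;>
          first | exact Or.inl h2 | (rw [e3] at h2; right; omega) | omega
      · rintro (h | h)
        · exact Or.inr (Or.inr (Or.inl ⟨c3, Or.inl h⟩))
        · refine Or.inr (Or.inr (Or.inl ⟨c3, Or.inr ?_⟩))
          rw [e3]; omega
    have hdisj : Disjoint
        ((Finset.range (2 * n)).filter (fun t => n ≤ j ∧ t = (l + n + 1) % (2 * n)))
        ((Finset.range (2 * n)).filter
          (fun t => (t + 2 * n - (l + n + 2) % (2 * n)) % (2 * n) ≤ n - 3)) := by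
      rw [Finset.disjoint_left]
      intro t h1 h2
      rw [Finset.mem_filter] at h1 h2
      obtain ⟨-, -, rfl⟩ := h1
      have e := modPred (m := 2 * n) (x := l + n + 1) (by omega)
      rw [show l + n + 1 + 1 = l + n + 2 by omega] at e
      rw [e] at h2
      omega
    rw [Finset.filter_congr (fun t _ => hiff t), Finset.filter_or,
      Finset.card_union_of_disjoint hdisj, Nat.cast_add,
      cardCount (2 * n) (l + n + 2) (n - 3) hm (by omega)]
    have hc1 : (((Finset.range (2 * n)).filter
        (fun t => n ≤ j ∧ t = (l + n + 1) % (2 * n))).card : ℝ)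
        = if n ≤ j then 1 else 0 := cardSingle _ hT1
    rw [hc1, show n - 3 + 1 = n - 2 by omega, Nat.cast_sub (by omega : 2 ≤ n)]
    unfold Cfun
    by_cases hj : n ≤ j
    · rw [if_pos hj, if_neg (by omega), if_neg (by omega), if_neg (by omega),
        if_pos ⟨c3, hj⟩]
      push_cast
      ring
    · rw [if_neg hj, if_neg (by omega), if_neg (by omega), if_pos ⟨c3, by omega⟩]
      push_cast
      ring
  by_cases c4 : i = n - 1
  · have hiff : ∀ t, Mcond n l t i j ↔ (t = l) := by
      intro t
      unfold Mcond
      constructor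
      · rintro (⟨h1, h2, h3⟩ | ⟨h1, h2, h3⟩ | ⟨h1, h2⟩ | ⟨h1, h2⟩ | ⟨h1, h2⟩ |
          ⟨h1, h2, h3⟩ | ⟨h1, h2, h3⟩) <;> first | exact h2 | omega
      · intro h; exact Or.inr (Or.inr (Or.inr (Or.inl ⟨c4, h⟩)))
    rw [Finset.filter_congr (fun t _ => hiff t), Finset.filter_eq',
      if_pos (Finset.mem_range.mpr hl)]
    unfold Cfun
    rw [if_neg (by omega), if_neg (by omega), if_neg (by omega), if_neg (by omega),
      if_pos c4]
    simp
  by_cases c5 : i = n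
  · have e5 : ((l + n - 2) % (2 * n) + 2 * n - (l + 1) % (2 * n)) % (2 * n)
        = l + n - 2 - (l + 1) := modR1 hm (by omega) (by omega)
    have hiff : ∀ t, Mcond n l t i j ↔ ((j + 2 ≤ n ∧ t = (l + n - 1) % (2 * n)) ∨
        (t + 2 * n - (l + 1) % (2 * n)) % (2 * n) ≤ n - 3) := by
      intro t
      unfold Mcond inCyc
      constructor
      · rintro (⟨h1, h2, h3⟩ | ⟨h1, h2, h3⟩ | ⟨h1, h2⟩ | ⟨h1, h2⟩ | ⟨h1, h2 | h2⟩ |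
          ⟨h1, h2, h3⟩ | ⟨h1, h2, h3⟩) <;>
          first | exact Or.inl h2 | (rw [e5] at h2; right; omega) | omega
      · rintro (h | h)
        · exact Or.inr (Or.inr (Or.inr (Or.inr (Or.inl ⟨c5, Or.inl h⟩))))
        · refine Or.inr (Or.inr (Or.inr (Or.inr (Or.inl ⟨c5, Or.inr ?_⟩))))
          rw [e5]; omega
    have hdisj : Disjoint
        ((Finset.range (2 * n)).filter (fun t => j + 2 ≤ n ∧ t = (l + n - 1) % (2 * n)))
        ((Finset.range (2 * n)).filter
          (fun t => (t + 2 * n - (l + 1) % (2 * n)) % (2 * n) ≤ n - 3)) := by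
      rw [Finset.disjoint_left]
      intro t h1 h2
      rw [Finset.mem_filter] at h1 h2
      obtain ⟨-, -, rfl⟩ := h1
      have e := modR1 (m := 2 * n) (a := l + 1) (b := l + n - 1) (by omega) (by omega)
        (by omega)
      rw [e] at h2
      omega
    rw [Finset.filter_congr (fun t _ => hiff t), Finset.filter_or,
      Finset.card_union_of_disjoint hdisj, Nat.cast_add,
      cardCount (2 * n) (l + 1) (n - 3) hm (by omega)]
    have hc1 : (((Finset.range (2 * n)).filter
        (fun t => j + 2 ≤ n ∧ t = (l + n - 1) % (2 * n))).card : ℝ)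
        = if j + 2 ≤ n then 1 else 0 := cardSingle _ hT2
    rw [hc1, show n - 3 + 1 = n - 2 by omega, Nat.cast_sub (by omega : 2 ≤ n)]
    unfold Cfun
    by_cases hj : j + 2 ≤ n
    · rw [if_pos hj, if_neg (by omega), if_neg (by omega), if_neg (by omega),
        if_neg (by omega), if_neg (by omega), if_pos ⟨c5, hj⟩]
      push_cast
      ring
    · rw [if_neg hj, if_neg (by omega), if_neg (by omega), if_neg (by omega),
        if_neg (by omega), if_neg (by omega), if_neg (by omega),
        if_pos ⟨c5, by omega⟩]
      push_cast
      ring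
  by_cases c6 : i = n + 1
  · have hiff : ∀ t, Mcond n l t i j ↔ ((j = n - 1 ∨ j = n) ∧ t = (l + n - 1) % (2 * n)) := by
      intro t
      unfold Mcond
      constructor
      · rintro (⟨h1, h2, h3⟩ | ⟨h1, h2, h3⟩ | ⟨h1, h2⟩ | ⟨h1, h2⟩ | ⟨h1, h2⟩ |
          ⟨h1, h2, h3⟩ | ⟨h1, h2, h3⟩) <;> first | exact ⟨h2, h3⟩ | omega
      · intro h
        exact Or.inr (Or.inr (Or.inr (Or.inr (Or.inr (Or.inl ⟨c6, h.1, h.2⟩)))))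
    rw [Finset.filter_congr (fun t _ => hiff t), cardSingle _ hT2]
    unfold Cfun
    by_cases hj : j = n - 1 ∨ j = n
    · rw [if_pos hj, if_neg (by omega), if_neg (by omega), if_neg (by omega),
        if_neg (by omega), if_neg (by omega), if_neg (by omega), if_neg (by omega),
        if_pos ⟨c6, hj⟩]
    · rw [if_neg hj, if_neg (by omega), if_neg (by tauto), if_neg (by omega),
        if_neg (by omega), if_neg (by omega), if_neg (by omega), if_neg (by omega),
        if_neg (by tauto), if_neg (by omega)]
  · have c7 : n + 2 ≤ i := by omega
    have hiff : ∀ t, Mcond n l t i j ↔ (j + 1 = i ∧ t = (l + n - 1) % (2 * n)) := by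
      intro t
      unfold Mcond
      constructor
      · rintro (⟨h1, h2, h3⟩ | ⟨h1, h2, h3⟩ | ⟨h1, h2⟩ | ⟨h1, h2⟩ | ⟨h1, h2⟩ |
          ⟨h1, h2, h3⟩ | ⟨h1, h2, h3⟩) <;> first | exact ⟨h2, h3⟩ | omega
      · intro h
        exact Or.inr (Or.inr (Or.inr (Or.inr (Or.inr (Or.inr ⟨c7, h.1, h.2⟩)))))
    rw [Finset.filter_congr (fun t _ => hiff t), cardSingle _ hT2]
    unfold Cfun
    by_cases hj : j + 1 = i
    · rw [if_pos hj, if_neg (by omega), if_neg (by omega), if_neg (by omega),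
        if_neg (by omega), if_neg (by omega), if_neg (by omega), if_neg (by omega),
        if_neg (by omega), if_pos ⟨c7, hj⟩]
    · rw [if_neg hj, if_neg (by omega), if_neg (by omega), if_neg (by omega),
        if_neg (by omega), if_neg (by omega), if_neg (by omega), if_neg (by omega),
        if_neg (by omega), if_neg (by omega)]

section Spec
attribute [local instance] Matrix.linftyOpNormedAddCommGroup Matrix.linftyOpNormedRing
  Matrix.linftyOpNormedAlgebra

variable {K : Type*} [Fintype K] [DecidableEq K]

noncomputable local instance : CompleteSpace (Matrix K K ℂ) :=
  FiniteDimensional.complete ℂ _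

example [Nonempty K] : Nontrivial (Matrix K K ℂ) := inferInstance

lemma mem_spec_iff (A : Matrix K K ℂ) {z : ℂ} :
    z ∈ spectrum ℂ A ↔ ∃ v, v ≠ 0 ∧ A.mulVec v = z • v := by
  rw [spectrum.mem_iff, Matrix.isUnit_iff_isUnit_det, isUnit_iff_ne_zero, not_not,
    ← Matrix.exists_mulVec_eq_zero_iff]
  constructor
  · rintro ⟨v, hv, h⟩
    refine ⟨v, hv, ?_⟩
    have h2 : ((algebraMap ℂ (Matrix K K ℂ)) z).mulVec v - A.mulVec v = 0 := by
      rw [← Matrix.sub_mulVec]; exact h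
    have h3 : ((algebraMap ℂ (Matrix K K ℂ)) z).mulVec v = z • v := by
      rw [Algebra.algebraMap_eq_smul_one, Matrix.smul_mulVec, Matrix.one_mulVec]
    rw [h3, sub_eq_zero] at h2
    exact h2.symm
  · rintro ⟨v, hv, h⟩
    refine ⟨v, hv, ?_⟩
    rw [Matrix.sub_mulVec]
    have h3 : ((algebraMap ℂ (Matrix K K ℂ)) z).mulVec v = z • v := by
      rw [Algebra.algebraMap_eq_smul_one, Matrix.smul_mulVec, Matrix.one_mulVec]
    rw [h3, h, sub_self]

lemma bddAbove_specSet (M : Matrix K K ℝ) :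
    BddAbove {x : ℝ | ∃ z ∈ spectrum ℂ (M.map (algebraMap ℝ ℂ)), ‖z‖ = x} := by
  have h := ((spectrum.isCompact (𝕜 := ℂ) (M.map (algebraMap ℝ ℂ))).image
    continuous_norm).bddAbove
  exact h

lemma abs_le_specRad {M : Matrix K K ℝ} {z : ℂ}
    (hz : z ∈ spectrum ℂ (M.map (algebraMap ℝ ℂ))) : ‖z‖ ≤ specRad M :=
  le_csSup (bddAbove_specSet M) ⟨z, hz, rfl⟩

lemma specRad_nonneg [Nonempty K] (M : Matrix K K ℝ) : 0 ≤ specRad M := by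
  obtain ⟨z, hz⟩ := spectrum.nonempty (M.map (algebraMap ℝ ℂ))
  exact le_trans (norm_nonneg z) (abs_le_specRad hz)


lemma entry_pow_nonneg (C : Matrix K K ℝ) (hC : ∀ a b, 0 ≤ C a b) (p : ℕ) :
    ∀ a b, 0 ≤ (C ^ p) a b := by
  induction p with
  | zero =>
    intro a b
    rw [pow_zero]
    by_cases h : a = b <;> simp [Matrix.one_apply, h]
  | succ p ih =>
    intro a b
    rw [pow_succ, Matrix.mul_apply]
    exact Finset.sum_nonneg fun c _ => mul_nonneg (ih a c) (hC c b)

open Filter Topology in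
lemma subinv [Nonempty K] (C : Matrix K K ℝ) (hC : ∀ a b, 0 ≤ C a b)
    (w : K → ℝ) (hw : ∀ a, 0 ≤ w a) (a₀ : K) (h0 : 0 < w a₀)
    (r : ℝ) (hr : 0 ≤ r) (hs : ∀ a, r * w a ≤ C.mulVec w a) :
    r ≤ specRad C := by
  set A := C.map (algebraMap ℝ ℂ) with hA
  have hpow : ∀ p a, r ^ p * w a ≤ (C ^ p).mulVec w a := by
    intro p
    induction p with
    | zero => intro a; simp [Matrix.one_mulVec]
    | succ p ih =>
      intro a
      have h1 : (C ^ (p + 1)).mulVec w a = (C ^ p).mulVec (C.mulVec w) a := by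
        rw [pow_succ, ← Matrix.mulVec_mulVec]
      have h2 : (C ^ p).mulVec (fun b => r * w b) a ≤ (C ^ p).mulVec (C.mulVec w) a := by
        unfold Matrix.mulVec dotProduct
        exact Finset.sum_le_sum fun b _ =>
          mul_le_mul_of_nonneg_left (hs b) (entry_pow_nonneg C hC p a b)
      have h3 : (C ^ p).mulVec (fun b => r * w b) a = r * (C ^ p).mulVec w a := by
        unfold Matrix.mulVec dotProduct
        rw [Finset.mul_sum]
        apply Finset.sum_congr rfl
        intro b _
        ring
      calc r ^ (p + 1) * w a = r * (r ^ p * w a) := by ring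
        _ ≤ r * ((C ^ p).mulVec w a) := mul_le_mul_of_nonneg_left (ih a) hr
        _ = (C ^ p).mulVec (fun b => r * w b) a := h3.symm
        _ ≤ (C ^ p).mulVec (C.mulVec w) a := h2
        _ = (C ^ (p + 1)).mulVec w a := h1.symm
  have hwa : w a₀ ≤ ‖w‖ := by
    have h1 := norm_le_pi_norm w a₀
    have h2 : w a₀ ≤ ‖w a₀‖ := le_abs_self _
    exact h2.trans h1
  have hwnorm : 0 < ‖w‖ := lt_of_lt_of_le h0 hwa
  have hnormb : ∀ p : ℕ, r ^ p * w a₀ ≤ ‖C ^ p‖ * ‖w‖ := by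
    intro p
    calc r ^ p * w a₀ ≤ (C ^ p).mulVec w a₀ := hpow p a₀
      _ ≤ ‖(C ^ p).mulVec w‖ := by
          have h := norm_le_pi_norm ((C ^ p).mulVec w) a₀
          rw [Real.norm_eq_abs] at h
          exact (le_abs_self _).trans h
      _ ≤ ‖C ^ p‖ * ‖w‖ := Matrix.linfty_opNorm_mulVec _ _
  have hmapnorm : ∀ B : Matrix K K ℝ, ‖B.map (algebraMap ℝ ℂ)‖₊ = ‖B‖₊ := by
    intro B
    rw [Matrix.linfty_opNNNorm_def, Matrix.linfty_opNNNorm_def]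
    congr 1
    funext a
    apply Finset.sum_congr rfl
    intro b _
    simp [Matrix.map_apply, Complex.nnnorm_real]
  have hAp : ∀ p : ℕ, A ^ p = (C ^ p).map (algebraMap ℝ ℂ) := by
    intro p
    rw [hA, show C.map (algebraMap ℝ ℂ) = (algebraMap ℝ ℂ).mapMatrix C from rfl,
      ← map_pow, RingHom.mapMatrix_apply]
  set ρ := spectralRadius ℂ A with hρ
  have hρtop : ρ ≠ ⊤ :=
    ((spectrum.spectralRadius_le_nnnorm A).trans_lt ENNReal.coe_lt_top).ne
  have gel := spectrum.pow_nnnorm_pow_one_div_tendsto_nhds_spectralRadius A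
  have gel2 : Tendsto (fun p : ℕ => ‖C ^ p‖ ^ (1 / (p : ℝ))) atTop (𝓝 ρ.toReal) := by
    have h1 := (ENNReal.tendsto_toReal hρtop).comp gel
    have h2 : ∀ p : ℕ, (((‖A ^ p‖₊ : ENNReal)) ^ (1 / (p : ℝ))).toReal
        = ‖C ^ p‖ ^ (1 / (p : ℝ)) := by
      intro p
      rw [← ENNReal.coe_rpow_of_nonneg _ (by positivity), ENNReal.coe_toReal,
        NNReal.coe_rpow, hAp p, hmapnorm, coe_nnnorm]
    refine h1.congr fun p => h2 p
  have hK : 0 < ‖w‖ / w a₀ := div_pos hwnorm h0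
  have hb : ∀ p : ℕ, 1 ≤ p → r ≤ ‖C ^ p‖ ^ (1 / (p : ℝ)) * (‖w‖ / w a₀) ^ (1 / (p : ℝ)) := by
    intro p hp
    have h1 : r ^ p ≤ ‖C ^ p‖ * (‖w‖ / w a₀) := by
      rw [← mul_div_assoc, le_div_iff₀ h0]
      exact hnormb p
    have hp0 : (p : ℝ) ≠ 0 := by positivity
    have h2 : r = (r ^ p) ^ (1 / (p : ℝ)) := by
      rw [← Real.rpow_natCast r p, ← Real.rpow_mul hr, mul_one_div, div_self hp0,
        Real.rpow_one]
    rw [h2]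
    calc (r ^ p) ^ (1 / (p : ℝ)) ≤ (‖C ^ p‖ * (‖w‖ / w a₀)) ^ (1 / (p : ℝ)) :=
        Real.rpow_le_rpow (pow_nonneg hr p) h1 (by positivity)
      _ = _ := Real.mul_rpow (norm_nonneg _) hK.le
  have hKone : Tendsto (fun p : ℕ => (‖w‖ / w a₀) ^ (1 / (p : ℝ))) atTop (𝓝 1) := by
    have hc : ContinuousAt (fun y : ℝ => (‖w‖ / w a₀) ^ y) 0 :=
      Real.continuousAt_const_rpow hK.ne'
    have h1 := hc.tendsto.comp tendsto_one_div_atTop_nhds_zero_nat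
    simpa [Function.comp_def, Real.rpow_zero] using h1
  have hfin : r ≤ ρ.toReal * 1 :=
    ge_of_tendsto (gel2.mul hKone) (eventually_atTop.mpr ⟨1, hb⟩)
  obtain ⟨z, hz, hz2⟩ := spectrum.exists_nnnorm_eq_spectralRadius A
  have hval : ρ.toReal = ‖z‖ := by
    rw [hρ, ← hz2, ENNReal.coe_toReal, coe_nnnorm]
  rw [hA] at hz
  calc r ≤ ρ.toReal * 1 := hfin
    _ = ‖z‖ := by rw [mul_one, hval]
    _ ≤ specRad C := abs_le_specRad hz

end Spec

set_option maxHeartbeats 1000000 in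
open Filter Topology in
theorem stmt6 (n : ℕ) (hn : 3 ≤ n) :
    specRad (Mmat n) = specRad (Cmat n) := by
  haveI hne1 : Nonempty (Fin (2 * n)) := ⟨⟨0, by omega⟩⟩
  haveI hne2 : Nonempty (Fin (2 * n - 1)) := ⟨⟨0, by omega⟩⟩
  have hMnn : ∀ p q, 0 ≤ Mmat n p q := by
    intro p q
    unfold Mmat
    rw [Matrix.of_apply]
    split_ifs <;> norm_num
  have hCnn : ∀ a b, 0 ≤ Cmat n a b := by
    intro a b
    have h3 : (3 : ℝ) ≤ (n : ℝ) := by exact_mod_cast hn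
    unfold Cmat Cfun
    rw [Matrix.of_apply]
    split_ifs <;> linarith
  have hrow : ∀ (l : Fin (2 * n)) (jj ii : Fin (2 * n - 1)),
      ∑ t : Fin (2 * n), Mmat n (l, jj) (t, ii) = Cfun n jj.val ii.val := by
    intro l jj ii
    have e : ∀ t : Fin (2 * n), Mmat n (l, jj) (t, ii)
        = (fun tt : ℕ => if Mcond n l.val tt jj.val ii.val then (1 : ℝ) else 0) t.val :=
      fun t => rfl
    rw [Finset.sum_congr rfl (fun t _ => e t),
      Fin.sum_univ_eq_sum_range
        (fun tt => if Mcond n l.val tt jj.val ii.val then (1 : ℝ) else 0) (2 * n),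
      Finset.sum_boole]
    exact rowSumCard n l.val jj.val ii.val hn l.isLt
  have hge : specRad (Cmat n) ≤ specRad (Mmat n) := by
    apply Real.sSup_le
    · rintro x ⟨z, hz, rfl⟩
      rw [mem_spec_iff] at hz
      obtain ⟨u, hu, huv⟩ := hz
      set V : (Fin (2 * n) × Fin (2 * n - 1)) → ℂ := fun p => u p.2 with hV
      have hVne : V ≠ 0 := by
        intro h
        apply hu
        funext a
        exact congrFun h (Classical.arbitrary _, a)
      have hMV : ((Mmat n).map (algebraMap ℝ ℂ)).mulVec V = z • V := by
        funext p
        obtain ⟨l, jj⟩ := p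
        have e1 : ((Mmat n).map (algebraMap ℝ ℂ)).mulVec V (l, jj)
            = ∑ q : Fin (2 * n) × Fin (2 * n - 1),
                ((Mmat n).map (algebraMap ℝ ℂ)) (l, jj) q * V q := rfl
        have e2 : ∀ i : Fin (2 * n - 1),
            ∑ t : Fin (2 * n), ((Mmat n).map (algebraMap ℝ ℂ)) (l, jj) (t, i)
              = ((Cfun n jj.val i.val : ℝ) : ℂ) := by
          intro i
          have e3 : ∑ t : Fin (2 * n), ((Mmat n).map (algebraMap ℝ ℂ)) (l, jj) (t, i)
              = (algebraMap ℝ ℂ) (∑ t : Fin (2 * n), Mmat n (l, jj) (t, i)) := by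
            rw [map_sum]
            rfl
          rw [e3, hrow l jj i]
          rfl
        calc ((Mmat n).map (algebraMap ℝ ℂ)).mulVec V (l, jj)
            = ∑ t : Fin (2 * n), ∑ i : Fin (2 * n - 1),
                ((Mmat n).map (algebraMap ℝ ℂ)) (l, jj) (t, i) * u i := by
              rw [e1, Fintype.sum_prod_type]
          _ = ∑ i : Fin (2 * n - 1),
                (∑ t : Fin (2 * n), ((Mmat n).map (algebraMap ℝ ℂ)) (l, jj) (t, i)) * u i := by
              rw [Finset.sum_comm]
              exact Finset.sum_congr rfl fun i _ => (Finset.sum_mul _ _ _).symm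
          _ = ∑ i : Fin (2 * n - 1), ((Cmat n).map (algebraMap ℝ ℂ)) jj i * u i := by
              refine Finset.sum_congr rfl fun i _ => ?_
              rw [e2 i]
              rfl
          _ = ((Cmat n).map (algebraMap ℝ ℂ)).mulVec u jj := rfl
          _ = (z • u) jj := by rw [huv]
          _ = (z • V) (l, jj) := rfl
      have hzM : z ∈ spectrum ℂ ((Mmat n).map (algebraMap ℝ ℂ)) :=
        (mem_spec_iff _).mpr ⟨V, hVne, hMV⟩
      exact abs_le_specRad hzM
    · exact specRad_nonneg _
  have hle : specRad (Mmat n) ≤ specRad (Cmat n) := by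
    apply Real.sSup_le
    · rintro x ⟨z, hz, rfl⟩
      rw [mem_spec_iff] at hz
      obtain ⟨v, hv, hMv⟩ := hz
      set w : Fin (2 * n - 1) → ℝ := fun a =>
        Finset.univ.sup' Finset.univ_nonempty
          (fun l : Fin (2 * n) => ‖v (l, a)‖) with hwdef
      have hwnn : ∀ a, 0 ≤ w a := by
        intro a
        have hb := Finset.le_sup' (fun l : Fin (2 * n) => ‖v (l, a)‖)
          (Finset.mem_univ (Classical.arbitrary (Fin (2 * n))))
        exact le_trans (norm_nonneg _) hb
      have hex : ∃ a₀, 0 < w a₀ := by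
        have hvp : ∃ p, v p ≠ 0 := by
          by_contra h
          push_neg at h
          exact hv (funext h)
        obtain ⟨⟨l₀, a₀⟩, hp⟩ := hvp
        refine ⟨a₀, lt_of_lt_of_le (norm_pos_iff.mpr hp) ?_⟩
        exact Finset.le_sup' (fun l : Fin (2 * n) => ‖v (l, a₀)‖)
          (Finset.mem_univ l₀)
      obtain ⟨a₀, ha₀⟩ := hex
      apply subinv (Cmat n) hCnn w hwnn a₀ ha₀ (‖z‖) (norm_nonneg z)
      intro a
      obtain ⟨lm, -, hlm⟩ := Finset.exists_mem_eq_sup' Finset.univ_nonempty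
        (fun l : Fin (2 * n) => ‖v (l, a)‖)
      have hwa : w a = ‖v (lm, a)‖ := hlm
      have key : ‖z‖ * w a
          = ‖((Mmat n).map (algebraMap ℝ ℂ)).mulVec v (lm, a)‖ := by
        rw [hMv, hwa]
        show ‖z‖ * ‖v (lm, a)‖ = ‖(z • v) (lm, a)‖
        rw [Pi.smul_apply, smul_eq_mul, norm_mul]
      have e1 : ((Mmat n).map (algebraMap ℝ ℂ)).mulVec v (lm, a)
          = ∑ q : Fin (2 * n) × Fin (2 * n - 1),
              ((Mmat n).map (algebraMap ℝ ℂ)) (lm, a) q * v q := rfl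
      calc ‖z‖ * w a
          = ‖((Mmat n).map (algebraMap ℝ ℂ)).mulVec v (lm, a)‖ := key
        _ ≤ ∑ q : Fin (2 * n) × Fin (2 * n - 1),
              ‖((Mmat n).map (algebraMap ℝ ℂ)) (lm, a) q * v q‖ := by
            rw [e1]
            exact norm_sum_le _ _
        _ = ∑ q : Fin (2 * n) × Fin (2 * n - 1), Mmat n (lm, a) q * ‖v q‖ := by
            refine Finset.sum_congr rfl fun q _ => ?_
            rw [Matrix.map_apply, norm_mul]
            congr 1
            rw [show (algebraMap ℝ ℂ) (Mmat n (lm, a) q) = ((Mmat n (lm, a) q : ℝ) : ℂ)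
              from rfl, Complex.norm_real, Real.norm_eq_abs, abs_of_nonneg (hMnn _ _)]
        _ ≤ ∑ q : Fin (2 * n) × Fin (2 * n - 1), Mmat n (lm, a) q * w q.2 := by
            refine Finset.sum_le_sum fun q _ => mul_le_mul_of_nonneg_left ?_ (hMnn _ _)
            exact Finset.le_sup' (fun l : Fin (2 * n) => ‖v (l, q.2)‖)
              (Finset.mem_univ q.1)
        _ = ∑ i : Fin (2 * n - 1), (∑ t : Fin (2 * n), Mmat n (lm, a) (t, i)) * w i := by
            rw [Fintype.sum_prod_type, Finset.sum_comm]
            refine Finset.sum_congr rfl fun i _ => ?_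
            rw [Finset.sum_mul]
        _ = ∑ i : Fin (2 * n - 1), Cmat n a i * w i := by
            refine Finset.sum_congr rfl fun i _ => ?_
            rw [hrow lm a i]
            rfl
        _ = (Cmat n).mulVec w a := rfl
    · exact specRad_nonneg _
  exact le_antisymm hle hge
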